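/- Let m ≤ K be positive integers and λ ≤ m. Let p_1, ..., p_m ∈ [0,1] satisfy ∑_{i=1}^m p_i ≥ λ(1-δ) for some δ ∈ (0,1), and let d_1 ≥ ... ≥ d_m > 0 be nonincreasing positive reals. Then ∑_{i=1}^m (1/d_i) * max{p_i * log(1/δ) - log 2, 0} ≥ ∑_{i=1}^λ (1/d_i) * log(1/(2δ)) - m/d_λ. -/

import Mathlib

/-- Primal form of the GAI lower-bound optimization: if `p_i ∈ [0,1]` with
`∑ p_i ≥ λ(1-δ)` and `d_1 ≥ ⋯ ≥ d_m > 0`, then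
`∑_i (1/d_i) max{p_i log(1/δ) - log 2, 0}
  ≥ ∑_{i ≤ λ} (1/d_i) log(1/(2δ)) - m/d_λ`. -/
theorem primal_lower_bound
    (m K lam : ℕ) (hm : 1 ≤ m) (hmK : m ≤ K) (hlam1 : 1 ≤ lam) (hlam : lam ≤ m)
    (δ : ℝ) (hδ : δ ∈ Set.Ioo (0:ℝ) 1)
    (d : ℕ → ℝ) (hdpos : ∀ i ∈ Finset.Icc 1 m, 0 < d i)
    (hdmono : ∀ i j, 1 ≤ i → i ≤ j → j ≤ m → d j ≤ d i)
    (p : ℕ → ℝ)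
    (hp0 : ∀ i ∈ Finset.Icc 1 m, 0 ≤ p i)
    (hp1 : ∀ i ∈ Finset.Icc 1 m, p i ≤ 1)
    (hpsum : (lam : ℝ) * (1 - δ) ≤ ∑ i ∈ Finset.Icc 1 m, p i) :
    (∑ i ∈ Finset.Icc 1 lam, (1 / d i) * Real.log (1 / (2 * δ))) - (m : ℝ) / d lam
      ≤ ∑ i ∈ Finset.Icc 1 m,
          (1 / d i) * max (p i * Real.log (1 / δ) - Real.log 2) 0 := by
  obtain ⟨hδ0, hδ1⟩ := hδ
  set L := Real.log (1 / δ) with hLdef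
  have hL0 : 0 < L := Real.log_pos (by rw [lt_div_iff₀ hδ0]; linarith)
  have hdlam : 0 < d lam := hdpos lam (Finset.mem_Icc.mpr ⟨hlam1, hlam⟩)
  have hδL : δ * L ≤ 1 := by
    have h := Real.log_le_sub_one_of_pos (show (0:ℝ) < 1/δ by positivity)
    have h2 : δ * L ≤ δ * (1/δ - 1) := by
      apply mul_le_mul_of_nonneg_left _ (le_of_lt hδ0)
      simpa [hLdef] using h
    have h3 : δ * (1/δ - 1) = 1 - δ := by field_simp
    linarith
  have hlog2 : Real.log 2 ≤ 1 := by
    have := Real.log_le_sub_one_of_pos (show (0:ℝ) < 2 by norm_num); linarith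
  have hlog2pos : 0 < Real.log 2 := Real.log_pos (by norm_num)
  have hkey : Real.log (1/(2*δ)) = L - Real.log 2 := by
    rw [hLdef, one_div, one_div, Real.log_inv, Real.log_inv,
      Real.log_mul (by norm_num) (ne_of_gt hδ0)]
    ring
  have hIcc : ∀ n : ℕ, Finset.Icc 1 n = Finset.Ioc 0 n := fun n => by
    rw [← Finset.Icc_add_one_left_eq_Ioc]; rfl
  rw [hIcc m, hIcc lam] at *
  -- split the sum
  have hsplit : ∀ f : ℕ → ℝ, ∑ i ∈ Finset.Ioc 0 m, f i
      = ∑ i ∈ Finset.Ioc 0 lam, f i + ∑ i ∈ Finset.Ioc lam m, f i := fun f => by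
    rw [← Finset.sum_Ioc_consecutive f (Nat.zero_le lam) hlam]
  rw [hsplit]
  -- termwise lower bounds
  have h1 : ∑ i ∈ Finset.Ioc 0 lam,
      ((1 / d i) * (L - Real.log 2) - (1 / d lam) * ((1 - p i) * L))
      ≤ ∑ i ∈ Finset.Ioc 0 lam, (1 / d i) * max (p i * L - Real.log 2) 0 := by
    apply Finset.sum_le_sum
    intro i hi
    obtain ⟨hi1, hi2⟩ := Finset.mem_Ioc.mp hi
    have him : i ∈ Finset.Ioc 0 m := Finset.mem_Ioc.mpr ⟨hi1, le_trans hi2 hlam⟩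
    have hdi : 0 < d i := hdpos i him
    have hdge : d lam ≤ d i := hdmono i lam hi1 hi2 hlam
    have hinv : 1 / d i ≤ 1 / d lam := one_div_le_one_div_of_le hdlam hdge
    have hp0i := hp0 i him
    have hp1i := hp1 i him
    rcases le_or_gt (Real.log 2) (p i * L) with hc | hc
    · rw [max_eq_left (by linarith)]
      have h1 : (1 - p i) * L ≥ 0 := by nlinarith
      nlinarith [mul_le_mul_of_nonneg_right hinv h1]
    · rw [max_eq_right (by linarith)]
      have h1 : (1 - p i) * L ≥ L - Real.log 2 := by nlinarith
      rcases le_or_gt (L - Real.log 2) 0 with hc2 | hc2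
      · have : (1 / d i) * (L - Real.log 2) ≤ 0 := by
          apply mul_nonpos_of_nonneg_of_nonpos (by positivity) hc2
        have : 0 ≤ (1 / d lam) * ((1 - p i) * L) := by
          apply mul_nonneg (by positivity); nlinarith
        linarith
      · have h2 : (1 / d i) * (L - Real.log 2) ≤ (1 / d lam) * (L - Real.log 2) :=
          mul_le_mul_of_nonneg_right hinv (le_of_lt hc2)
        have h3 : (1 / d lam) * (L - Real.log 2) ≤ (1 / d lam) * ((1 - p i) * L) :=
          mul_le_mul_of_nonneg_left h1 (by positivity)
        linarith
  have h2 : ∑ i ∈ Finset.Ioc lam m, (1 / d lam) * (p i * L - Real.log 2)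
      ≤ ∑ i ∈ Finset.Ioc lam m, (1 / d i) * max (p i * L - Real.log 2) 0 := by
    apply Finset.sum_le_sum
    intro i hi
    obtain ⟨hi1, hi2⟩ := Finset.mem_Ioc.mp hi
    have him : i ∈ Finset.Ioc 0 m := Finset.mem_Ioc.mpr ⟨by omega, hi2⟩
    have hdi : 0 < d i := hdpos i him
    have hdle : d i ≤ d lam := hdmono lam i hlam1 (le_of_lt hi1) hi2
    have hinv : 1 / d lam ≤ 1 / d i := one_div_le_one_div_of_le hdi hdle
    rcases le_or_gt (Real.log 2) (p i * L) with hc | hc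
    · rw [max_eq_left (by linarith)]
      exact mul_le_mul_of_nonneg_right hinv (by linarith)
    · rw [max_eq_right (by linarith), mul_zero]
      apply mul_nonpos_of_nonneg_of_nonpos (by positivity) (by linarith)
  refine le_trans ?_ (add_le_add h1 h2)
  -- algebra
  have e1 : ∑ i ∈ Finset.Ioc 0 lam,
      ((1 / d i) * (L - Real.log 2) - (1 / d lam) * ((1 - p i) * L))
      = ∑ i ∈ Finset.Ioc 0 lam, (1 / d i) * (L - Real.log 2)
        - (1 / d lam) * L * ((lam : ℝ) - ∑ i ∈ Finset.Ioc 0 lam, p i) := by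
    rw [Finset.sum_sub_distrib]
    congr 1
    calc ∑ i ∈ Finset.Ioc 0 lam, (1 / d lam) * ((1 - p i) * L)
        = ∑ i ∈ Finset.Ioc 0 lam, ((1 / d lam) * L - (1 / d lam) * L * p i) := by
          apply Finset.sum_congr rfl; intro i _; ring
      _ = (lam : ℝ) * ((1 / d lam) * L)
            - (1 / d lam) * L * ∑ i ∈ Finset.Ioc 0 lam, p i := by
          rw [Finset.sum_sub_distrib, Finset.sum_const, Nat.card_Ioc, ← Finset.mul_sum]
          simp [nsmul_eq_mul]
      _ = (1 / d lam) * L * ((lam : ℝ) - ∑ i ∈ Finset.Ioc 0 lam, p i) := by ring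
  have e2 : ∑ i ∈ Finset.Ioc lam m, (1 / d lam) * (p i * L - Real.log 2)
      = (1 / d lam) * L * (∑ i ∈ Finset.Ioc lam m, p i)
        - (1 / d lam) * (((m : ℝ) - lam) * Real.log 2) := by
    calc ∑ i ∈ Finset.Ioc lam m, (1 / d lam) * (p i * L - Real.log 2)
        = ∑ i ∈ Finset.Ioc lam m, ((1 / d lam) * L * p i - (1 / d lam) * Real.log 2) := by
          apply Finset.sum_congr rfl; intro i _; ring
      _ = (1 / d lam) * L * ∑ i ∈ Finset.Ioc lam m, p i
            - ((m : ℝ) - lam) * ((1 / d lam) * Real.log 2) := by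
          rw [Finset.sum_sub_distrib, Finset.sum_const, Nat.card_Ioc, ← Finset.mul_sum]
          simp [nsmul_eq_mul, Nat.cast_sub hlam]
      _ = _ := by ring
  rw [e1, e2, hkey]
  -- final inequality
  have hS : (lam : ℝ) * (1 - δ) ≤ ∑ i ∈ Finset.Ioc 0 lam, p i + ∑ i ∈ Finset.Ioc lam m, p i := by
    rw [← hsplit p]; exact hpsum
  set S1 := ∑ i ∈ Finset.Ioc 0 lam, p i
  set S2 := ∑ i ∈ Finset.Ioc lam m, p i
  have hml : (lam : ℝ) ≤ (m : ℝ) := by exact_mod_cast hlam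
  have hlam0 : (0:ℝ) ≤ (lam : ℝ) := by positivity
  have hinvlam : (0:ℝ) < 1 / d lam := by positivity
  have key1 : L * (S1 + S2 - lam) ≥ -(lam : ℝ) := by
    have h4 : S1 + S2 - lam ≥ -((lam : ℝ) * δ) := by linarith only [hS]
    have h5 : L * (S1 + S2 - lam) ≥ L * (-((lam : ℝ) * δ)) :=
      mul_le_mul_of_nonneg_left h4 hL0.le
    have h6 : (lam : ℝ) * (δ * L) ≤ (lam : ℝ) * 1 :=
      mul_le_mul_of_nonneg_left hδL hlam0
    linarith only [h5, h6]
  have key2 : ((m : ℝ) - lam) * Real.log 2 ≤ (m : ℝ) - lam := by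
    have := mul_le_mul_of_nonneg_left hlog2 (by linarith : (0:ℝ) ≤ (m : ℝ) - lam)
    linarith
  have : -((m : ℝ) / d lam) ≤ (1 / d lam) * (L * (S1 + S2 - lam) - ((m : ℝ) - lam) * Real.log 2) := by
    have h5 : L * (S1 + S2 - lam) - ((m : ℝ) - lam) * Real.log 2 ≥ -(m : ℝ) := by linarith only [key1, key2]
    calc -((m : ℝ) / d lam) = (1 / d lam) * (-(m : ℝ)) := by ring
      _ ≤ _ := mul_le_mul_of_nonneg_left h5 (le_of_lt hinvlam)
  linarith only [this]
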